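/- Let Q and R be finite connected posets on disjoint sets and let v ∈ min(R). Let N_v(Q, R) denote the number of subsets I ◎ (Q ↘_v R) with I_- = {v} and I order-isomorphic to Q. Then |{ g ∈ Aut(Q ↘_v R) : g(v) = v }| = |Aut(Q)| · |{ h ∈ Aut(R) : h(v) = v }| · N_v(Q, R). -/

import Mathlib

open scoped Classical

/-- A finite poset on a subset (`carrier`) of an ambient type `α`. -/
structure FinPoset (α : Type*) where
  carrier : Finset α
  le : α → α → Prop
  mem_of_le : ∀ ⦃x y⦄, le x y → x ∈ carrier ∧ y ∈ carrier
  le_refl : ∀ x ∈ carrier, le x x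
  le_trans : ∀ ⦃x y z⦄, le x y → le y z → le x z
  le_antisymm : ∀ ⦃x y⦄, le x y → le y x → x = y

namespace FinPoset

variable {α : Type*} [DecidableEq α]

/-- The strict order `x <_P y`. -/
def lt (P : FinPoset α) (x y : α) : Prop := P.le x y ∧ x ≠ y

/-- `min(P)`: the set of minimal elements of `P`. -/
noncomputable def minSet (P : FinPoset α) : Finset α :=
  P.carrier.filter (fun x => ∀ y, P.le y x → y = x)

/-- Connectivity of a subset `S`, for the graph with edges between comparable pairs. -/
def ConnOn (P : FinPoset α) (S : Set α) : Prop :=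
  ∀ x ∈ S, ∀ y ∈ S,
    Relation.ReflTransGen (fun a b => a ∈ S ∧ b ∈ S ∧ (P.le a b ∨ P.le b a)) x y

/-- A finite poset is connected if it is nonempty and any two elements are linked by a
chain of comparable pairs. -/
def Connected (P : FinPoset α) : Prop :=
  P.carrier.Nonempty ∧ P.ConnOn ↑P.carrier

/-- `I` is a connected component of `S` (for the comparability graph of `P`). -/
def IsCC (P : FinPoset α) (S I : Set α) : Prop :=
  I.Nonempty ∧ I ⊆ S ∧ P.ConnOn I ∧
    ∀ x ∈ I, ∀ y ∈ S, (P.le x y ∨ P.le y x) → y ∈ I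

/-- `I_- = {x ∈ P \ I : ∃ y ∈ I, x ≤_P y}`. -/
noncomputable def below (P : FinPoset α) (I : Finset α) : Finset α :=
  (P.carrier \ I).filter (fun x => ∃ y ∈ I, P.le x y)

/-- `I ◎ P` : `I_-` is a singleton `{w}` with `w ∈ min(P)`, and `I` is a connected
component of `{x ∈ P : w <_P x}`. -/
def Circ (P : FinPoset α) (I : Finset α) : Prop :=
  ∃ w, P.below I = {w} ∧ w ∈ P.minSet ∧
    P.IsCC {x | x ∈ P.carrier ∧ P.lt w x} ↑I

/-- The induced poset on a subset `S`. -/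
def restrict (P : FinPoset α) (S : Finset α) : FinPoset α where
  carrier := P.carrier ∩ S
  le x y := P.le x y ∧ x ∈ S ∧ y ∈ S
  mem_of_le := by
    intro x y h
    rcases P.mem_of_le h.1 with ⟨hx, hy⟩
    exact ⟨Finset.mem_inter.2 ⟨hx, h.2.1⟩, Finset.mem_inter.2 ⟨hy, h.2.2⟩⟩
  le_refl := by
    intro x hx
    rcases Finset.mem_inter.1 hx with ⟨h1, h2⟩
    exact ⟨P.le_refl x h1, h2, h2⟩
  le_trans := by
    rintro x y z ⟨h1, hx, hy⟩ ⟨h2, _, hz⟩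
    exact ⟨P.le_trans h1 h2, hx, hz⟩
  le_antisymm := by
    rintro x y ⟨h1, _, _⟩ ⟨h2, _, _⟩
    exact P.le_antisymm h1 h2

/-- The grafting `P ↘_v Q` of `P` above the vertex `v` of `Q` (auxiliary version, with
the disjointness hypotheses as arguments). -/
def graftAux (P Q : FinPoset α) (v : α) (hd : Disjoint P.carrier Q.carrier)
    (hv : v ∈ Q.carrier) : FinPoset α where
  carrier := P.carrier ∪ Q.carrier
  le x y := P.le x y ∨ Q.le x y ∨ (Q.le x v ∧ y ∈ P.carrier)
  mem_of_le := by
    rintro x y (h | h | ⟨h1, h2⟩)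
    · rcases P.mem_of_le h with ⟨hx, hy⟩
      exact ⟨Finset.mem_union_left _ hx, Finset.mem_union_left _ hy⟩
    · rcases Q.mem_of_le h with ⟨hx, hy⟩
      exact ⟨Finset.mem_union_right _ hx, Finset.mem_union_right _ hy⟩
    · exact ⟨Finset.mem_union_right _ (Q.mem_of_le h1).1, Finset.mem_union_left _ h2⟩
  le_refl := by
    intro x hx
    rcases Finset.mem_union.1 hx with h | h
    · exact Or.inl (P.le_refl x h)
    · exact Or.inr (Or.inl (Q.le_refl x h))
  le_trans := by
    rintro x y z (h1 | h1 | ⟨h1, h1'⟩) (h2 | h2 | ⟨h2, h2'⟩)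
    · exact Or.inl (P.le_trans h1 h2)
    · exact absurd (Q.mem_of_le h2).1 (Finset.disjoint_left.1 hd (P.mem_of_le h1).2)
    · exact absurd (Q.mem_of_le h2).1 (Finset.disjoint_left.1 hd (P.mem_of_le h1).2)
    · exact absurd (P.mem_of_le h2).1 (Finset.disjoint_right.1 hd (Q.mem_of_le h1).2)
    · exact Or.inr (Or.inl (Q.le_trans h1 h2))
    · exact Or.inr (Or.inr ⟨Q.le_trans h1 h2, h2'⟩)
    · exact Or.inr (Or.inr ⟨h1, (P.mem_of_le h2).2⟩)
    · exact absurd (Q.mem_of_le h2).1 (Finset.disjoint_left.1 hd h1')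
    · exact absurd (Q.mem_of_le h2).1 (Finset.disjoint_left.1 hd h1')
  le_antisymm := by
    rintro x y (h1 | h1 | ⟨h1, h1'⟩) (h2 | h2 | ⟨h2, h2'⟩)
    · exact P.le_antisymm h1 h2
    · exact absurd (Q.mem_of_le h2).1 (Finset.disjoint_left.1 hd (P.mem_of_le h1).2)
    · exact absurd (Q.mem_of_le h2).1 (Finset.disjoint_left.1 hd (P.mem_of_le h1).2)
    · exact absurd (P.mem_of_le h2).1 (Finset.disjoint_right.1 hd (Q.mem_of_le h1).2)
    · exact Q.le_antisymm h1 h2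
    · exact absurd (Q.mem_of_le h1).1 (Finset.disjoint_left.1 hd h2')
    · exact absurd (P.mem_of_le h2).2 (Finset.disjoint_right.1 hd (Q.mem_of_le h1).1)
    · exact absurd (Q.mem_of_le h2).1 (Finset.disjoint_left.1 hd h1')
    · exact absurd (Q.mem_of_le h1).1 (Finset.disjoint_left.1 hd h2')
  
/-- The grafting `P ↘_v Q` of `P` above the vertex `v` of `Q`: the poset on
`X₁ ⊔ X₂` restricting to `P` on `X₁` and to `Q` on `X₂`, with `q ≤ p` for `q ∈ X₂`,
`p ∈ X₁` iff `q ≤_Q v`.  (Junk value when the carriers are not disjoint or `v ∉ Q`.) -/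
noncomputable def graft (P Q : FinPoset α) (v : α) : FinPoset α :=
  if h : Disjoint P.carrier Q.carrier ∧ v ∈ Q.carrier then P.graftAux Q v h.1 h.2 else P

/-- The set of subsets `I` of the carrier with `I ◎ P`. -/
noncomputable def circSet (P : FinPoset α) : Finset (Finset α) :=
  P.carrier.powerset.filter (fun I => P.Circ I)

/-- Order isomorphisms from `A` to `B`, encoded as maps `α → α` that are the identity
outside of the carrier of `A`. -/
def Isos (A B : FinPoset α) : Set (α → α) :=
  {f | Set.BijOn f ↑A.carrier ↑B.carrier ∧
    (∀ x ∈ A.carrier, ∀ y ∈ A.carrier, (A.le x y ↔ B.le (f x) (f y))) ∧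
    ∀ x, x ∉ A.carrier → f x = x}

/-- `⟨A, B⟩`: the number of order isomorphisms from `A` to `B`. -/
noncomputable def pairing (A B : FinPoset α) : ℕ := Nat.card ↥(Isos A B)

/-- The NAP coproduct `δ(P) = (1/|min(P)|) Σ_{I ◎ P} I ⊗ (P \ I)`, with values in the
rational vector space spanned by pairs of finite posets. -/
noncomputable def delta (P : FinPoset α) : (FinPoset α × FinPoset α) →₀ ℚ :=
  ((P.minSet.card : ℚ))⁻¹ • ∑ I ∈ P.circSet,
    Finsupp.single (P.restrict I, P.restrict (P.carrier \ I)) (1 : ℚ)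


section Main
variable {α : Type*} [DecidableEq α] {Q R : FinPoset α} {v : α}

local notation "P" => FinPoset.graft Q R v

variable (hQ : Q.Connected) (hR : R.Connected) (hd : Disjoint Q.carrier R.carrier)
  (hv : v ∈ R.minSet)

set_option linter.unusedVariables false
set_option linter.unusedSectionVars false

lemma hvc (hv : v ∈ R.minSet) : v ∈ R.carrier := (Finset.mem_filter.1 hv).1

lemma hvmin (hv : v ∈ R.minSet) : ∀ y, R.le y v → y = v := (Finset.mem_filter.1 hv).2

include hd hv

lemma graft_carrier : (P).carrier = Q.carrier ∪ R.carrier := by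
  rw [graft, dif_pos ⟨hd, hvc hv⟩]; rfl

lemma graft_le {x y : α} :
    (P).le x y ↔ (Q.le x y ∨ R.le x y ∨ (R.le x v ∧ y ∈ Q.carrier)) := by
  rw [graft, dif_pos ⟨hd, hvc hv⟩]; rfl

lemma hvQ : v ∉ Q.carrier := Finset.disjoint_right.1 hd (hvc hv)

/-- On pairs with first component in `Q`, `P.le` is `Q.le`. -/
lemma le_Q {x y : α} (hx : x ∈ Q.carrier) : (P).le x y ↔ Q.le x y := by
  rw [graft_le hd hv]
  constructor
  · rintro (h | h | ⟨h, _⟩)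
    · exact h
    · exact absurd (R.mem_of_le h).1 (Finset.disjoint_left.1 hd hx)
    · exact absurd (R.mem_of_le h).1 (Finset.disjoint_left.1 hd hx)
  · exact Or.inl

/-- On pairs with second component in `R`, `P.le` is `R.le`. -/
lemma le_R {x y : α} (hy : y ∈ R.carrier) : (P).le x y ↔ R.le x y := by
  rw [graft_le hd hv]
  constructor
  · rintro (h | h | ⟨_, h⟩)
    · exact absurd (Q.mem_of_le h).2 (Finset.disjoint_left.1 hd · hy)
    · exact h
    · exact absurd hy (Finset.disjoint_left.1 hd h)
  · exact fun h => Or.inr (Or.inl h)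

lemma le_cross {x y : α} (hy : y ∈ Q.carrier) : (P).le x y ↔ Q.le x y ∨ R.le x v := by
  rw [graft_le hd hv]
  constructor
  · rintro (h | h | ⟨h, _⟩)
    · exact Or.inl h
    · exact absurd hy (Finset.disjoint_left.1 hd · (R.mem_of_le h).2)
    · exact Or.inr h
  · rintro (h | h)
    · exact Or.inl h
    · exact Or.inr (Or.inr ⟨h, hy⟩)

lemma le_v_of_memQ {x : α} (hx : x ∈ Q.carrier) : (P).le v x :=
  (le_cross hd hv hx).2 (Or.inr (R.le_refl v (hvc hv)))

lemma lt_v_of_memQ {x : α} (hx : x ∈ Q.carrier) : (P).lt v x :=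
  ⟨le_v_of_memQ hd hv hx, fun h => hvQ hd hv (h ▸ hx)⟩

lemma v_mem_carrier : v ∈ (P).carrier := by
  rw [graft_carrier hd hv]; exact Finset.mem_union_right _ (hvc hv)

lemma v_min : v ∈ (P).minSet := by
  refine Finset.mem_filter.2 ⟨v_mem_carrier hd hv, fun y h => ?_⟩
  exact hvmin hv y ((le_R hd hv (hvc hv)).1 h)

omit hd hv in
/-- Membership transport along an automorphism. -/
lemma aut_mem_iff {A : FinPoset α} {f : α → α} (hf : f ∈ Isos A A) {x : α} :
    f x ∈ A.carrier ↔ x ∈ A.carrier := by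
  constructor
  · intro h
    by_contra hx
    rw [hf.2.2 x hx] at h
    exact hx h
  · exact fun h => hf.1.1 h

omit hd hv in
/-- Automorphisms are closed under composition. -/
lemma aut_comp {A : FinPoset α} {f g : α → α} (hf : f ∈ Isos A A) (hg : g ∈ Isos A A) :
    (f ∘ g) ∈ Isos A A := by
  refine ⟨hf.1.comp hg.1, fun x hx y hy => ?_, fun x hx => ?_⟩
  · rw [hg.2.1 x hx y hy, hf.2.1 _ (hg.1.1 hx) _ (hg.1.1 hy)]
    rfl
  · show f (g x) = x
    rw [hg.2.2 x hx, hf.2.2 x hx]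

omit hd hv in
/-- A two-sided inverse of an automorphism is an automorphism. -/
lemma aut_inv {A : FinPoset α} {f g : α → α} (hf : f ∈ Isos A A)
    (hgf : ∀ x, g (f x) = x) (hfg : ∀ x, f (g x) = x) : g ∈ Isos A A := by
  have hgout : ∀ x ∉ A.carrier, g x = x := by
    intro x hx
    conv_lhs => rw [← hf.2.2 x hx]
    exact hgf x
  have hmapsTo : Set.MapsTo g ↑A.carrier ↑A.carrier := by
    intro y hy
    by_contra h
    have h2 := hf.2.2 (g y) (by simpa using h)
    rw [hfg y] at h2
    exact h (by simpa [← h2] using hy)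
  refine ⟨⟨hmapsTo, fun x _ y _ hxy => ?_, fun y hy => ⟨f y, hf.1.1 hy, hgf y⟩⟩,
    fun x hx y hy => ?_, hgout⟩
  · rw [← hfg x, ← hfg y, hxy]
  · rw [hf.2.1 _ (hmapsTo hx) _ (hmapsTo hy), hfg, hfg]
/-- Two connected components sharing a point are equal. -/
lemma IsCC_unique {P' : FinPoset α} {S I J : Set α} (hI : P'.IsCC S I) (hJ : P'.IsCC S J)
    {z : α} (hzI : z ∈ I) (hzJ : z ∈ J) : I = J := by
  have key : ∀ (I J : Set α), P'.IsCC S I → P'.IsCC S J → z ∈ I → z ∈ J → I ⊆ J := by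
    intro I J hI hJ hzI hzJ x hx
    have hchain := hI.2.2.1 z hzI x hx
    clear hx
    induction hchain with
    | refl => exact hzJ
    | tail _ hstep ih =>
      exact hJ.2.2.2 _ ih _ (hI.2.1 hstep.2.1) hstep.2.2
  exact Set.Subset.antisymm (key I J hI hJ hzI hzJ) (key J I hJ hI hzJ hzI)

include hQ in
lemma Qcc : (P).IsCC {x | x ∈ (P).carrier ∧ (P).lt v x} ↑Q.carrier := by
  obtain ⟨q0, hq0⟩ := hQ.1
  refine ⟨⟨q0, hq0⟩, ?_, ?_, ?_⟩
  · intro x hx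
    exact ⟨by rw [graft_carrier hd hv]; exact Finset.mem_union_left _ hx,
      lt_v_of_memQ hd hv hx⟩
  · intro x hx y hy
    refine Relation.ReflTransGen.mono ?_ _ _ (hQ.2 x hx y hy)
    rintro a b ⟨ha, hb, h | h⟩
    · exact ⟨ha, hb, Or.inl ((le_Q hd hv ha).2 h)⟩
    · exact ⟨ha, hb, Or.inr ((le_Q hd hv hb).2 h)⟩
  · rintro x hx y ⟨hyc, hvy⟩ (h | h)
    · exact (Q.mem_of_le ((le_Q hd hv hx).1 h)).2
    · rcases (le_cross hd hv hx).1 h with h' | h'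
      · exact (Q.mem_of_le h').1
      · exact absurd (hvmin hv y h').symm hvy.2

include hQ in
lemma belowQ : (P).below Q.carrier = {v} := by
  ext x
  simp only [below, Finset.mem_filter, Finset.mem_sdiff, Finset.mem_singleton]
  constructor
  · rintro ⟨⟨hxc, hxQ⟩, y, hy, hxy⟩
    rcases (le_cross hd hv hy).1 hxy with h | h
    · exact absurd (Q.mem_of_le h).1 hxQ
    · exact hvmin hv x h
  · rintro rfl
    obtain ⟨q0, hq0⟩ := hQ.1
    exact ⟨⟨v_mem_carrier hd hv, hvQ hd hv⟩, q0, hq0, le_v_of_memQ hd hv hq0⟩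

lemma Qsub : Q.carrier ⊆ (P).carrier := by
  rw [graft_carrier hd hv]; exact Finset.subset_union_left

lemma Rsub : R.carrier ⊆ (P).carrier := by
  rw [graft_carrier hd hv]; exact Finset.subset_union_right

lemma restrict_carrier {I : Finset α} (h : I ⊆ (P).carrier) :
    ((P).restrict I).carrier = I := Finset.inter_eq_right.2 h

lemma id_iso_Q : (id : α → α) ∈ Isos ((P).restrict Q.carrier) Q := by
  have hc : ((P).restrict Q.carrier).carrier = Q.carrier := restrict_carrier hd hv (Qsub hd hv)
  refine ⟨by rw [hc]; exact Set.bijOn_id _, ?_, fun x _ => rfl⟩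
  rw [hc]
  intro x hx y hy
  show ((P).le x y ∧ _ ∧ _) ↔ _
  rw [le_Q hd hv hx]
  exact ⟨fun h => h.1, fun h => ⟨h, hx, hy⟩⟩

end Main

noncomputable def SSet {α : Type*} [DecidableEq α] (Q R : FinPoset α) (v : α) :
    Finset (Finset α) :=
  (graft Q R v).circSet.filter (fun I => (graft Q R v).below I = {v} ∧
    (FinPoset.Isos ((graft Q R v).restrict I) Q).Nonempty)

section Main2
variable {α : Type*} [DecidableEq α] {Q R : FinPoset α} {v : α}

local notation "P" => FinPoset.graft Q R v
local notation "SS" => FinPoset.SSet Q R v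

variable (hQ : Q.Connected) (hR : R.Connected) (hd : Disjoint Q.carrier R.carrier)
  (hv : v ∈ R.minSet)

set_option linter.unusedVariables false
set_option linter.unusedSectionVars false

include hd hv

lemma mem_SS {I : Finset α} :
    I ∈ SS ↔ (I ⊆ (P).carrier ∧ (P).Circ I) ∧ ((P).below I = {v} ∧
      (FinPoset.Isos ((P).restrict I) Q).Nonempty) := by
  rw [SSet, Finset.mem_filter, circSet, Finset.mem_filter, Finset.mem_powerset, and_assoc]

include hQ in
lemma Q_mem_SS : Q.carrier ∈ SS := by
  refine (mem_SS hd hv).2 ⟨⟨Qsub hd hv, v, belowQ hQ hd hv, v_min hd hv, Qcc hQ hd hv⟩,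
    belowQ hQ hd hv, ⟨id, id_iso_Q hd hv⟩⟩

lemma SS_spec {I : Finset α} (hI : I ∈ SS) :
    I ⊆ (P).carrier ∧ (P).below I = {v} ∧
      (P).IsCC {x | x ∈ (P).carrier ∧ (P).lt v x} ↑I ∧ v ∉ I := by
  obtain ⟨⟨hsub, w, hbw, _, hcc⟩, hb, _⟩ := (mem_SS hd hv).1 hI
  have hwv : w = v := by
    have h2 : ({w} : Finset α) = {v} := hbw ▸ hb
    exact Finset.singleton_injective h2
  rw [hwv] at hcc
  have hvI : v ∉ I := by
    have : v ∈ (P).below I := hb ▸ Finset.mem_singleton_self v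
    exact (Finset.mem_sdiff.1 (Finset.mem_filter.1 this).1).2
  exact ⟨hsub, hb, hcc, hvI⟩

lemma SS_lt_v {I : Finset α} (hI : I ∈ SS) {x : α} (hx : x ∈ I) : (P).lt v x :=
  ((SS_spec hd hv hI).2.2.1.2.1 hx).2

include hv in
lemma SS_up {I : Finset α} (hI : I ∈ SS) {x y : α} (hx : x ∈ I) (hxy : (P).le x y) :
    y ∈ I := by
  obtain ⟨hsub, hbel, hcc, hvI⟩ := SS_spec hd hv hI
  have hyc : y ∈ (P).carrier := ((P).mem_of_le hxy).2
  have hyv : y ≠ v := by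
    rintro rfl
    exact hvI (hvmin hv x ((le_R hd hv (hvc hv)).1 hxy) ▸ hx)
  have hvy : (P).lt v y :=
    ⟨(P).le_trans (SS_lt_v hd hv hI hx).1 hxy, fun h => hyv h.symm⟩
  exact hcc.2.2.2 x hx y ⟨hyc, hvy⟩ (Or.inl hxy)

lemma SS_down {I : Finset α} (hI : I ∈ SS) {x y : α} (hx : x ∈ I) (hyx : (P).le y x)
    (hyI : y ∉ I) : y = v := by
  have h : y ∈ (P).below I :=
    Finset.mem_filter.2 ⟨Finset.mem_sdiff.2 ⟨((P).mem_of_le hyx).1, hyI⟩, x, hx, hyx⟩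
  rw [(SS_spec hd hv hI).2.1] at h
  exact Finset.mem_singleton.1 h

include hQ in
lemma SS_eq_Q {I : Finset α} (hI : I ∈ SS) {z : α} (hzI : z ∈ I) (hzQ : z ∈ Q.carrier) :
    I = Q.carrier := by
  have := IsCC_unique hd hv (SS_spec hd hv hI).2.2.1 (Qcc hQ hd hv) hzI hzQ
  exact_mod_cast Finset.coe_injective this

lemma glue_spec {a h : α → α} (ha : a ∈ Isos Q Q) (hh : h ∈ Isos R R) (hhv : h v = v) :
    (a ∘ h) ∈ Isos P P ∧ (a ∘ h) v = v ∧ (∀ x ∈ Q.carrier, (a ∘ h) x = a x) ∧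
      ∀ x ∈ R.carrier, (a ∘ h) x = h x := by
  have hQx : ∀ x ∈ Q.carrier, (a ∘ h) x = a x := fun x hx => by
    show a (h x) = a x
    rw [hh.2.2 x (Finset.disjoint_left.1 hd hx)]
  have hRx : ∀ x ∈ R.carrier, (a ∘ h) x = h x := fun x hx => by
    show a (h x) = h x
    exact ha.2.2 _ (Finset.disjoint_right.1 hd (hh.1.1 hx))
  have hOx : ∀ x, x ∉ Q.carrier → x ∉ R.carrier → (a ∘ h) x = x := fun x h1 h2 => by
    show a (h x) = x
    rw [hh.2.2 x h2, ha.2.2 x h1]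
  have memQ : ∀ x, (a ∘ h) x ∈ Q.carrier ↔ x ∈ Q.carrier := by
    intro x
    by_cases h1 : x ∈ Q.carrier
    · rw [hQx x h1]
      simp [h1, (aut_mem_iff ha).2 h1]
    by_cases h2 : x ∈ R.carrier
    · rw [hRx x h2]
      simp [h1, Finset.disjoint_right.1 hd (hh.1.1 h2)]
    · rw [hOx x h1 h2]
  have memR : ∀ x, (a ∘ h) x ∈ R.carrier ↔ x ∈ R.carrier := by
    intro x
    by_cases h2 : x ∈ R.carrier
    · rw [hRx x h2]
      have h3 := hh.1.1 h2
      simp only [Finset.mem_coe] at h3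
      simp [h2, h3]
    by_cases h1 : x ∈ Q.carrier
    · rw [hQx x h1]
      simp [h2, Finset.disjoint_left.1 hd ((aut_mem_iff ha).2 h1)]
    · rw [hOx x h1 h2]
  have hle : ∀ x y, ((P).le x y ↔ (P).le ((a ∘ h) x) ((a ∘ h) y)) := by
    intro x y
    rw [graft_le hd hv, graft_le hd hv]
    refine or_congr ?_ (or_congr ?_ (and_congr ?_ (memQ y).symm))
    · constructor
      · intro hxy
        obtain ⟨h1, h2⟩ := Q.mem_of_le hxy
        rw [hQx x h1, hQx y h2, ← ha.2.1 x h1 y h2]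
        exact hxy
      · intro hxy
        have h1 := (memQ x).1 (Q.mem_of_le hxy).1
        have h2 := (memQ y).1 (Q.mem_of_le hxy).2
        rw [hQx x h1, hQx y h2, ← ha.2.1 x h1 y h2] at hxy
        exact hxy
    · constructor
      · intro hxy
        obtain ⟨h1, h2⟩ := R.mem_of_le hxy
        rw [hRx x h1, hRx y h2, ← hh.2.1 x h1 y h2]
        exact hxy
      · intro hxy
        have h1 := (memR x).1 (R.mem_of_le hxy).1
        have h2 := (memR y).1 (R.mem_of_le hxy).2
        rw [hRx x h1, hRx y h2, ← hh.2.1 x h1 y h2] at hxy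
        exact hxy
    · constructor
      · intro hxv
        have h1 := (R.mem_of_le hxv).1
        rw [hRx x h1, ← hhv, ← hh.2.1 x h1 v (hvc hv)]
        exact hxv
      · intro hxv
        have h1 := (memR x).1 (R.mem_of_le hxv).1
        rw [hRx x h1, ← hhv, ← hh.2.1 x h1 v (hvc hv)] at hxv
        exact hxv
  have hmem : ∀ x, (a ∘ h) x ∈ (P).carrier ↔ x ∈ (P).carrier := by
    intro x
    rw [graft_carrier hd hv, Finset.mem_union, Finset.mem_union]
    push_cast
    rw [memQ, memR]
  refine ⟨⟨⟨?_, ?_, ?_⟩, ?_, ?_⟩, ?_, hQx, hRx⟩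
  · intro x hx
    exact_mod_cast (hmem x).2 hx
  · intro x hx y hy hxy
    rcases Finset.mem_union.1 (by rw [← graft_carrier hd hv]; exact_mod_cast hx) with h1 | h1
    · rcases Finset.mem_union.1 (by rw [← graft_carrier hd hv]; exact_mod_cast hy) with h2 | h2
      · rw [hQx x h1, hQx y h2] at hxy
        exact ha.1.2.1 h1 h2 hxy
      · rw [hQx x h1, hRx y h2] at hxy
        exact absurd (hxy ▸ (aut_mem_iff ha).2 h1)
          (Finset.disjoint_right.1 hd (hh.1.1 h2))
    · rcases Finset.mem_union.1 (by rw [← graft_carrier hd hv]; exact_mod_cast hy) with h2 | h2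
      · rw [hRx x h1, hQx y h2] at hxy
        exact absurd (hxy ▸ hh.1.1 h1) (Finset.disjoint_left.1 hd ((aut_mem_iff ha).2 h2))
      · rw [hRx x h1, hRx y h2] at hxy
        exact hh.1.2.1 h1 h2 hxy
  · intro y hy
    rcases Finset.mem_union.1 (by rw [← graft_carrier hd hv]; exact_mod_cast hy) with h1 | h1
    · obtain ⟨x, hx, hax⟩ := ha.1.2.2 h1
      refine ⟨x, by exact_mod_cast Qsub hd hv hx, ?_⟩
      rw [hQx x hx, hax]
    · obtain ⟨x, hx, hax⟩ := hh.1.2.2 h1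
      refine ⟨x, by exact_mod_cast Rsub hd hv hx, ?_⟩
      rw [hRx x hx, hax]
  · exact fun x hx y hy => hle x y
  · intro x hx
    rw [graft_carrier hd hv, Finset.mem_union] at hx
    push_neg at hx
    exact hOx x hx.1 hx.2
  · show a (h v) = v
    rw [hhv]
    exact ha.2.2 v (hvQ hd hv)

end Main2

section Defs
variable {α : Type*} [DecidableEq α] [Nonempty α]

noncomputable def sigF (Q R : FinPoset α) (v : α) (I : Finset α) : α → α :=
  if h : (FinPoset.Isos ((graft Q R v).restrict I) Q).Nonempty then h.some else id

noncomputable def tauF (Q R : FinPoset α) (v : α) (I : Finset α) : α → α :=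
  Function.invFunOn (sigF Q R v I) ↑I

noncomputable def swapF (Q R : FinPoset α) (v : α) (I : Finset α) (x : α) : α :=
  if x ∈ I then sigF Q R v I x else if x ∈ Q.carrier then tauF Q R v I x else x

noncomputable def swepF (Q R : FinPoset α) (v : α) (I : Finset α) (x : α) : α :=
  if x ∈ Q.carrier then tauF Q R v I x else if x ∈ I then sigF Q R v I x else x

end Defs

section Main3
variable {α : Type*} [DecidableEq α] [Nonempty α] {Q R : FinPoset α} {v : α}

local notation "P" => FinPoset.graft Q R v
local notation "SS" => FinPoset.SSet Q R v

variable (hQ : Q.Connected) (hR : R.Connected) (hd : Disjoint Q.carrier R.carrier)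
  (hv : v ∈ R.minSet) {I : Finset α}

set_option linter.unusedVariables false
set_option linter.unusedSectionVars false

include hd hv

lemma sig_isos (hI : I ∈ SS) : sigF Q R v I ∈ Isos ((P).restrict I) Q := by
  rw [sigF, dif_pos ((mem_SS hd hv).1 hI).2.2]
  exact Set.Nonempty.some_mem _

lemma sig_bij (hI : I ∈ SS) : Set.BijOn (sigF Q R v I) ↑I ↑Q.carrier := by
  have h := (sig_isos hd hv hI).1
  rwa [restrict_carrier hd hv (SS_spec hd hv hI).1] at h

lemma sig_memQ (hI : I ∈ SS) {x : α} (hx : x ∈ I) : sigF Q R v I x ∈ Q.carrier := by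
  exact_mod_cast (sig_bij hd hv hI).1 (by exact_mod_cast hx)

lemma sig_iso (hI : I ∈ SS) {x y : α} (hx : x ∈ I) (hy : y ∈ I) :
    ((P).le x y ↔ Q.le (sigF Q R v I x) (sigF Q R v I y)) := by
  have hsub := (SS_spec hd hv hI).1
  have h := (sig_isos hd hv hI).2.1 x (by rw [restrict_carrier hd hv hsub]; exact hx) y
    (by rw [restrict_carrier hd hv hsub]; exact hy)
  exact ⟨fun h' => h.1 ⟨h', hx, hy⟩, fun h' => (h.2 h').1⟩

lemma tau_invOn (hI : I ∈ SS) :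
    Set.InvOn (tauF Q R v I) (sigF Q R v I) ↑I ↑Q.carrier :=
  (sig_bij hd hv hI).invOn_invFunOn

lemma tau_sig (hI : I ∈ SS) {x : α} (hx : x ∈ I) : tauF Q R v I (sigF Q R v I x) = x :=
  (tau_invOn hd hv hI).1 (by exact_mod_cast hx)

lemma sig_tau (hI : I ∈ SS) {y : α} (hy : y ∈ Q.carrier) :
    sigF Q R v I (tauF Q R v I y) = y :=
  (tau_invOn hd hv hI).2 (by exact_mod_cast hy)

lemma tau_mem (hI : I ∈ SS) {y : α} (hy : y ∈ Q.carrier) : tauF Q R v I y ∈ I := by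
  obtain ⟨x, hx, rfl⟩ := (sig_bij hd hv hI).2.2 (by exact_mod_cast hy : y ∈ (↑Q.carrier : Set α))
  have hx' : x ∈ I := by exact_mod_cast hx
  rw [tau_sig hd hv hI hx']
  exact hx'

omit hd hv in
lemma swap_eq1 {x : α} (hx : x ∈ I) : swapF Q R v I x = sigF Q R v I x := if_pos hx

omit hd hv in
lemma swap_eq2 {x : α} (hx : x ∉ I) (hx' : x ∈ Q.carrier) :
    swapF Q R v I x = tauF Q R v I x := by rw [swapF, if_neg hx, if_pos hx']

omit hd hv in
lemma swap_eq3 {x : α} (hx : x ∉ I) (hx' : x ∉ Q.carrier) : swapF Q R v I x = x := by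
  rw [swapF, if_neg hx, if_neg hx']

omit hd hv in
lemma swep_eq1 {x : α} (hx : x ∈ Q.carrier) : swepF Q R v I x = tauF Q R v I x := if_pos hx

omit hd hv in
lemma swep_eq2 {x : α} (hx : x ∉ Q.carrier) (hx' : x ∈ I) :
    swepF Q R v I x = sigF Q R v I x := by rw [swepF, if_neg hx, if_pos hx']

omit hd hv in
lemma swep_eq3 {x : α} (hx : x ∉ Q.carrier) (hx' : x ∉ I) : swepF Q R v I x = x := by
  rw [swepF, if_neg hx, if_neg hx']

include hQ in
lemma swap_memI (hI : I ∈ SS) {x : α} (hx : x ∈ Q.carrier) : swapF Q R v I x ∈ I := by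
  by_cases hxI : x ∈ I
  · rw [swap_eq1 hxI]
    have h2 := sig_memQ hd hv hI hxI
    rwa [← SS_eq_Q hQ hd hv hI hxI hx] at h2
  · rw [swap_eq2 hxI hx]
    exact tau_mem hd hv hI hx

include hQ in
lemma swep_memQ (hI : I ∈ SS) {x : α} (hx : x ∈ I) : swepF Q R v I x ∈ Q.carrier := by
  by_cases hxQ : x ∈ Q.carrier
  · rw [swep_eq1 hxQ]
    have h2 := tau_mem hd hv hI hxQ
    rw [← SS_eq_Q hQ hd hv hI hx hxQ]
    exact h2
  · rw [swep_eq2 hxQ hx]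
    exact sig_memQ hd hv hI hx

include hQ in
lemma swep_swap (hI : I ∈ SS) (x : α) : swepF Q R v I (swapF Q R v I x) = x := by
  by_cases hxI : x ∈ I
  · rw [swap_eq1 hxI, swep_eq1 (sig_memQ hd hv hI hxI)]
    exact tau_sig hd hv hI hxI
  by_cases hxQ : x ∈ Q.carrier
  · rw [swap_eq2 hxI hxQ]
    have h1 : tauF Q R v I x ∈ I := tau_mem hd hv hI hxQ
    have h2 : tauF Q R v I x ∉ Q.carrier := fun h =>
      hxI (SS_eq_Q hQ hd hv hI h1 h ▸ hxQ)
    rw [swep_eq2 h2 h1]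
    exact sig_tau hd hv hI hxQ
  · rw [swap_eq3 hxI hxQ, swep_eq3 hxQ hxI]

include hQ in
lemma swap_swep (hI : I ∈ SS) (x : α) : swapF Q R v I (swepF Q R v I x) = x := by
  by_cases hxQ : x ∈ Q.carrier
  · rw [swep_eq1 hxQ, swap_eq1 (tau_mem hd hv hI hxQ)]
    exact sig_tau hd hv hI hxQ
  by_cases hxI : x ∈ I
  · rw [swep_eq2 hxQ hxI]
    have h1 : sigF Q R v I x ∈ Q.carrier := sig_memQ hd hv hI hxI
    have h2 : sigF Q R v I x ∉ I := fun h =>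
      hxQ (SS_eq_Q hQ hd hv hI h h1 ▸ hxI)
    rw [swap_eq2 h2 h1]
    exact tau_sig hd hv hI hxI
  · rw [swep_eq3 hxQ hxI, swap_eq3 hxI hxQ]

lemma swap_v (hI : I ∈ SS) : swapF Q R v I v = v :=
  swap_eq3 (SS_spec hd hv hI).2.2.2 (hvQ hd hv)

include hQ in
lemma swap_mono (hI : I ∈ SS) {x y : α} (hxy : (P).le x y) :
    (P).le (swapF Q R v I x) (swapF Q R v I y) := by
  by_cases hxI : x ∈ I
  · have hyI : y ∈ I := SS_up hd hv hI hxI hxy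
    rw [swap_eq1 hxI, swap_eq1 hyI]
    exact (le_Q hd hv (sig_memQ hd hv hI hxI)).2 ((sig_iso hd hv hI hxI hyI).1 hxy)
  by_cases hxQ : x ∈ Q.carrier
  · have hyQ : y ∈ Q.carrier := (Q.mem_of_le ((le_Q hd hv hxQ).1 hxy)).2
    have hyI : y ∉ I := fun hyI => hxI (SS_eq_Q hQ hd hv hI hyI hyQ ▸ hxQ)
    rw [swap_eq2 hxI hxQ, swap_eq2 hyI hyQ]
    have h := sig_iso hd hv hI (tau_mem hd hv hI hxQ) (tau_mem hd hv hI hyQ)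
    rw [sig_tau hd hv hI hxQ, sig_tau hd hv hI hyQ] at h
    exact h.2 ((le_Q hd hv hxQ).1 hxy)
  · rw [swap_eq3 hxI hxQ]
    by_cases hyI : y ∈ I
    · have hxv : x = v := SS_down hd hv hI hyI hxy hxI
      rw [hxv, swap_eq1 hyI]
      exact le_v_of_memQ hd hv (sig_memQ hd hv hI hyI)
    by_cases hyQ : y ∈ Q.carrier
    · have hxv : x = v := SS_down hd hv (Q_mem_SS hQ hd hv) hyQ hxy hxQ
      rw [hxv, swap_eq2 hyI hyQ]
      exact (SS_lt_v hd hv hI (tau_mem hd hv hI hyQ)).1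
    · rw [swap_eq3 hyI hyQ]
      exact hxy

include hQ in
lemma swep_mono (hI : I ∈ SS) {x y : α} (hxy : (P).le x y) :
    (P).le (swepF Q R v I x) (swepF Q R v I y) := by
  by_cases hxQ : x ∈ Q.carrier
  · have hyQ : y ∈ Q.carrier := (Q.mem_of_le ((le_Q hd hv hxQ).1 hxy)).2
    rw [swep_eq1 hxQ, swep_eq1 hyQ]
    have h := sig_iso hd hv hI (tau_mem hd hv hI hxQ) (tau_mem hd hv hI hyQ)
    rw [sig_tau hd hv hI hxQ, sig_tau hd hv hI hyQ] at h
    exact h.2 ((le_Q hd hv hxQ).1 hxy)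
  by_cases hxI : x ∈ I
  · have hyI : y ∈ I := SS_up hd hv hI hxI hxy
    have hyQ : y ∉ Q.carrier := fun hyQ => hxQ (SS_eq_Q hQ hd hv hI hyI hyQ ▸ hxI)
    rw [swep_eq2 hxQ hxI, swep_eq2 hyQ hyI]
    exact (le_Q hd hv (sig_memQ hd hv hI hxI)).2 ((sig_iso hd hv hI hxI hyI).1 hxy)
  · rw [swep_eq3 hxQ hxI]
    by_cases hyQ : y ∈ Q.carrier
    · have hxv : x = v := SS_down hd hv (Q_mem_SS hQ hd hv) hyQ hxy hxQ
      rw [hxv, swep_eq1 hyQ]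
      exact (SS_lt_v hd hv hI (tau_mem hd hv hI hyQ)).1
    by_cases hyI : y ∈ I
    · have hxv : x = v := SS_down hd hv hI hyI hxy hxI
      rw [hxv, swep_eq2 hyQ hyI]
      exact le_v_of_memQ hd hv (sig_memQ hd hv hI hyI)
    · rw [swep_eq3 hyQ hyI]
      exact hxy

include hQ in
lemma swap_mem_carrier (hI : I ∈ SS) {x : α} (hx : x ∈ (P).carrier) :
    swapF Q R v I x ∈ (P).carrier := by
  by_cases hxI : x ∈ I
  · rw [swap_eq1 hxI]
    exact Qsub hd hv (sig_memQ hd hv hI hxI)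
  by_cases hxQ : x ∈ Q.carrier
  · rw [swap_eq2 hxI hxQ]
    exact (SS_spec hd hv hI).1 (tau_mem hd hv hI hxQ)
  · rwa [swap_eq3 hxI hxQ]

include hQ in
lemma swep_mem_carrier (hI : I ∈ SS) {x : α} (hx : x ∈ (P).carrier) :
    swepF Q R v I x ∈ (P).carrier := by
  by_cases hxQ : x ∈ Q.carrier
  · rw [swep_eq1 hxQ]
    exact (SS_spec hd hv hI).1 (tau_mem hd hv hI hxQ)
  by_cases hxI : x ∈ I
  · rw [swep_eq2 hxQ hxI]
    exact Qsub hd hv (sig_memQ hd hv hI hxI)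
  · rwa [swep_eq3 hxQ hxI]

include hQ in
lemma swap_isos (hI : I ∈ SS) : swapF Q R v I ∈ Isos P P := by
  refine ⟨⟨fun x hx => ?_, fun x _ y _ hxy => ?_, fun y hy => ?_⟩, fun x hx y hy => ?_,
    fun x hx => ?_⟩
  · exact_mod_cast swap_mem_carrier hQ hd hv hI (by exact_mod_cast hx)
  · rw [← swep_swap hQ hd hv hI x, hxy, swep_swap hQ hd hv hI]
  · refine ⟨swepF Q R v I y, ?_, swap_swep hQ hd hv hI y⟩
    exact_mod_cast swep_mem_carrier hQ hd hv hI (by exact_mod_cast hy)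
  · constructor
    · exact swap_mono hQ hd hv hI
    · intro h
      have := swep_mono hQ hd hv hI h
      rwa [swep_swap hQ hd hv hI, swep_swap hQ hd hv hI] at this
  · refine swap_eq3 (fun h => hx ?_) (fun h => hx ?_)
    · exact_mod_cast (SS_spec hd hv hI).1 h
    · exact_mod_cast Qsub hd hv h

include hQ in
lemma swep_isos (hI : I ∈ SS) : swepF Q R v I ∈ Isos P P :=
  aut_inv (swap_isos hQ hd hv hI) (swep_swap hQ hd hv hI) (swap_swep hQ hd hv hI)

include hQ in
lemma swap_image (hI : I ∈ SS) : Finset.image (swapF Q R v I) Q.carrier = I := by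
  ext y
  rw [Finset.mem_image]
  constructor
  · rintro ⟨x, hx, rfl⟩
    exact swap_memI hQ hd hv hI hx
  · intro hy
    exact ⟨swepF Q R v I y, swep_memQ hQ hd hv hI hy, swap_swep hQ hd hv hI y⟩

include hQ in
lemma image_mem_SS {g : α → α} (hg : g ∈ Isos P P) (hgv : g v = v) :
    Q.carrier.image g ∈ SS := by
  obtain ⟨q0, hq0⟩ := hQ.1
  have memg : ∀ x, g x ∈ (P).carrier ↔ x ∈ (P).carrier := fun x => aut_mem_iff hg
  have hQc : Q.carrier ⊆ (P).carrier := Qsub hd hv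
  have hle : ∀ x ∈ (P).carrier, ∀ y ∈ (P).carrier, ((P).le x y ↔ (P).le (g x) (g y)) :=
    hg.2.1
  have ginj : ∀ x ∈ (P).carrier, ∀ y ∈ (P).carrier, g x = g y → x = y := by
    intro x hx y hy h
    exact hg.1.2.1 (by exact_mod_cast hx) (by exact_mod_cast hy) h
  set I := Q.carrier.image g with hIdef
  have memI : ∀ {y}, y ∈ I ↔ ∃ x ∈ Q.carrier, g x = y := fun {y} => Finset.mem_image
  have hIsub : I ⊆ (P).carrier := by
    intro y hy
    obtain ⟨x, hx, rfl⟩ := memI.1 hy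
    exact (memg x).2 (hQc hx)
  have hvI : v ∉ I := by
    intro hvI
    obtain ⟨q, hq, hgq⟩ := memI.1 hvI
    have : q = v := ginj q (hQc hq) v (v_mem_carrier hd hv) (by rw [hgq, hgv])
    exact hvQ hd hv (this ▸ hq)
  have hltvI : ∀ {y}, y ∈ I → (P).lt v y := by
    intro y hy
    obtain ⟨q, hq, rfl⟩ := memI.1 hy
    refine ⟨?_, fun h => hvI (h ▸ hy)⟩
    have := (hle v (v_mem_carrier hd hv) q (hQc hq)).1 (le_v_of_memQ hd hv hq)
    rwa [hgv] at this
  have belowI : (P).below I = {v} := by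
    ext x
    simp only [below, Finset.mem_filter, Finset.mem_sdiff, Finset.mem_singleton]
    constructor
    · rintro ⟨⟨hxc, hxI⟩, y, hy, hxy⟩
      obtain ⟨q, hq, rfl⟩ := memI.1 hy
      obtain ⟨x', hx', rfl⟩ := hg.1.2.2 (by exact_mod_cast hxc : x ∈ (↑(P).carrier : Set α))
      have hx'c : x' ∈ (P).carrier := by exact_mod_cast hx'
      have hle' : (P).le x' q := (hle x' hx'c q (hQc hq)).2 hxy
      have hx'Q : x' ∉ Q.carrier := fun h => hxI (memI.2 ⟨x', h, rfl⟩)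
      have : x' ∈ (P).below Q.carrier :=
        Finset.mem_filter.2 ⟨Finset.mem_sdiff.2 ⟨hx'c, hx'Q⟩, q, hq, hle'⟩
      rw [belowQ hQ hd hv] at this
      rw [Finset.mem_singleton.1 this, hgv]
    · rintro rfl
      refine ⟨⟨v_mem_carrier hd hv, hvI⟩, g q0, memI.2 ⟨q0, hq0, rfl⟩, ?_⟩
      exact (hltvI (memI.2 ⟨q0, hq0, rfl⟩)).1
  have hcc : (P).IsCC {x | x ∈ (P).carrier ∧ (P).lt v x} ↑I := by
    refine ⟨⟨g q0, by exact_mod_cast memI.2 ⟨q0, hq0, rfl⟩⟩, ?_, ?_, ?_⟩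
    · intro y hy
      have hy' : y ∈ I := by exact_mod_cast hy
      exact ⟨hIsub hy', hltvI hy'⟩
    · intro x hx y hy
      obtain ⟨qx, hqx, rfl⟩ := memI.1 (by exact_mod_cast hx)
      obtain ⟨qy, hqy, rfl⟩ := memI.1 (by exact_mod_cast hy)
      refine Relation.ReflTransGen.lift g ?_ _ _ (hQ.2 qx hqx qy hqy)
      rintro a b ⟨ha, hb, hab | hab⟩
      have ha' : a ∈ Q.carrier := by exact_mod_cast ha
      have hb' : b ∈ Q.carrier := by exact_mod_cast hb
      · exact ⟨by exact_mod_cast memI.2 ⟨a, ha', rfl⟩, by exact_mod_cast memI.2 ⟨b, hb', rfl⟩,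
          Or.inl ((hle a (hQc ha') b (hQc hb')).1 ((le_Q hd hv ha').2 hab))⟩
      · have ha' : a ∈ Q.carrier := by exact_mod_cast ha
        have hb' : b ∈ Q.carrier := by exact_mod_cast hb
        exact ⟨by exact_mod_cast memI.2 ⟨a, ha', rfl⟩, by exact_mod_cast memI.2 ⟨b, hb', rfl⟩,
          Or.inr ((hle b (hQc hb') a (hQc ha')).1 ((le_Q hd hv hb').2 hab))⟩
    · rintro x hx y ⟨hyc, hvy⟩ hcomp
      obtain ⟨qx, hqx, rfl⟩ := memI.1 (by exact_mod_cast hx)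
      obtain ⟨y', hy', rfl⟩ := hg.1.2.2 (by exact_mod_cast hyc : y ∈ (↑(P).carrier : Set α))
      have hy'c : y' ∈ (P).carrier := by exact_mod_cast hy'
      have hy'U : y' ∈ {x | x ∈ (P).carrier ∧ (P).lt v x} := by
        refine ⟨hy'c, ?_, fun h => hvy.2 (by rw [← h, hgv])⟩
        have := (hle v (v_mem_carrier hd hv) y' hy'c).2 (by rw [hgv]; exact hvy.1)
        exact this
      have hcomp' : Q.le qx y' ∨ Q.le y' qx := by
        rcases hcomp with h | h
        · exact Or.inl ((le_Q hd hv hqx).1 ((hle qx (hQc hqx) y' hy'c).2 h))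
        · have := (hle y' hy'c qx (hQc hqx)).2 h
          rcases (le_cross hd hv hqx).1 this with h' | h'
          · exact Or.inr h'
          · exact absurd (hvmin hv y' h').symm hy'U.2.2
      have : y' ∈ ↑Q.carrier := (Qcc hQ hd hv).2.2.2 qx (by exact_mod_cast hqx) y' hy'U
        (by rcases hcomp' with h | h
            · exact Or.inl ((le_Q hd hv hqx).2 h)
            · exact Or.inr ((le_Q hd hv (Q.mem_of_le h).1).2 h))
      exact_mod_cast memI.2 ⟨y', by exact_mod_cast this, rfl⟩
  have hiso : (FinPoset.Isos ((P).restrict I) Q).Nonempty := by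
    classical
    set ρ : α → α := fun x => if x ∈ I then Function.invFunOn g ↑(P).carrier x else x with hρ
    have linv : ∀ q ∈ (P).carrier, Function.invFunOn g ↑(P).carrier (g q) = q := by
      intro q hq
      exact hg.1.2.1.leftInvOn_invFunOn (by exact_mod_cast hq)
    have hρg : ∀ q ∈ Q.carrier, ρ (g q) = q := by
      intro q hq
      rw [hρ]
      simp only [memI.2 ⟨q, hq, rfl⟩, if_pos]
      exact linv q (hQc hq)
    have hcarrier : ((P).restrict I).carrier = I := restrict_carrier hd hv hIsub
    refine ⟨ρ, ⟨?_, ?_, ?_⟩, ?_, ?_⟩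
    · rw [hcarrier]
      intro x hx
      obtain ⟨q, hq, rfl⟩ := memI.1 (by exact_mod_cast hx)
      rw [hρg q hq]
      exact_mod_cast hq
    · rw [hcarrier]
      intro x hx y hy hxy
      obtain ⟨qx, hqx, rfl⟩ := memI.1 (by exact_mod_cast hx)
      obtain ⟨qy, hqy, rfl⟩ := memI.1 (by exact_mod_cast hy)
      rw [hρg qx hqx, hρg qy hqy] at hxy
      rw [hxy]
    · rw [hcarrier]
      intro q hq
      have hq' : q ∈ Q.carrier := by exact_mod_cast hq
      exact ⟨g q, by exact_mod_cast memI.2 ⟨q, hq', rfl⟩, hρg q hq'⟩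
    · intro x hx y hy
      rw [hcarrier] at hx hy
      obtain ⟨qx, hqx, rfl⟩ := memI.1 hx
      obtain ⟨qy, hqy, rfl⟩ := memI.1 hy
      rw [hρg qx hqx, hρg qy hqy]
      constructor
      · rintro ⟨h, -, -⟩
        exact (le_Q hd hv hqx).1 ((hle qx (hQc hqx) qy (hQc hqy)).2 h)
      · intro h
        exact ⟨(hle qx (hQc hqx) qy (hQc hqy)).1 ((le_Q hd hv hqx).2 h), hx, hy⟩
    · intro x hx
      rw [hcarrier] at hx
      rw [hρ]
      simp only [hx, if_neg, if_false]
  exact (mem_SS hd hv).2 ⟨⟨hIsub, v, belowI, v_min hd hv, hcc⟩, belowI, hiso⟩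

omit hd hv in
lemma aut_image {A : FinPoset α} {f : α → α} (hf : f ∈ Isos A A) :
    Finset.image f A.carrier = A.carrier := by
  ext y
  rw [Finset.mem_image]
  constructor
  · rintro ⟨x, hx, rfl⟩
    exact_mod_cast hf.1.1 (by exact_mod_cast hx)
  · intro hy
    obtain ⟨x, hx, hfx⟩ := hf.1.2.2 (by exact_mod_cast hy : y ∈ (↑A.carrier : Set α))
    exact ⟨x, by exact_mod_cast hx, hfx⟩

include hQ in
lemma g2_spec {g : α → α} (hg : g ∈ Isos P P) (hgv : g v = v) :
    (swepF Q R v (Q.carrier.image g) ∘ g) ∈ Isos P P ∧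
      (swepF Q R v (Q.carrier.image g) ∘ g) v = v ∧
      Set.BijOn (swepF Q R v (Q.carrier.image g) ∘ g) ↑Q.carrier ↑Q.carrier ∧
      Set.BijOn (swepF Q R v (Q.carrier.image g) ∘ g) ↑R.carrier ↑R.carrier := by
  set I := Q.carrier.image g with hIdef
  have hI : I ∈ SS := image_mem_SS hQ hd hv hg hgv
  set g2 := swepF Q R v I ∘ g with hg2
  have hg2iso : g2 ∈ Isos P P := aut_comp (swep_isos hQ hd hv hI) hg
  have hg2v : g2 v = v := by
    show swepF Q R v I (g v) = v
    rw [hgv]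
    exact swep_eq3 (hvQ hd hv) (SS_spec hd hv hI).2.2.2
  have hmapsQ : ∀ x ∈ Q.carrier, g2 x ∈ Q.carrier := by
    intro x hx
    exact swep_memQ hQ hd hv hI (Finset.mem_image.2 ⟨x, hx, rfl⟩)
  have hinj : ∀ x ∈ (P).carrier, ∀ y ∈ (P).carrier, g2 x = g2 y → x = y := by
    intro x hx y hy h
    exact hg2iso.1.2.1 (by exact_mod_cast hx) (by exact_mod_cast hy) h
  have hsurjQ : ∀ q ∈ Q.carrier, ∃ x ∈ Q.carrier, g2 x = q := by
    intro q hq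
    obtain ⟨x, hx, hgx⟩ := hg2iso.1.2.2
      (by exact_mod_cast Qsub hd hv hq : q ∈ (↑(P).carrier : Set α))
    have hxc : x ∈ (P).carrier := by exact_mod_cast hx
    refine ⟨x, ?_, hgx⟩
    -- g x = swapF (g2 x) = swapF q ∈ I, so x ∈ Q
    have hgxI : g x ∈ I := by
      have h1 : swapF Q R v I (g2 x) = g x := by
        show swapF Q R v I (swepF Q R v I (g x)) = g x
        exact swap_swep hQ hd hv hI (g x)
      rw [hgx] at h1
      rw [← h1]
      exact swap_memI hQ hd hv hI hq
    obtain ⟨q', hq', hq'x⟩ := Finset.mem_image.1 hgxI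
    have : q' = x := hg.1.2.1 (by exact_mod_cast Qsub hd hv hq') (by exact_mod_cast hxc) hq'x
    exact this ▸ hq'
  have hbijQ : Set.BijOn g2 ↑Q.carrier ↑Q.carrier := by
    refine ⟨fun x hx => by exact_mod_cast hmapsQ x (by exact_mod_cast hx),
      fun x hx y hy h => hinj x (Qsub hd hv (by exact_mod_cast hx))
        y (Qsub hd hv (by exact_mod_cast hy)) h, fun q hq => ?_⟩
    obtain ⟨x, hx, hgx⟩ := hsurjQ q (by exact_mod_cast hq)
    exact ⟨x, by exact_mod_cast hx, hgx⟩
  have hmapsR : ∀ x ∈ R.carrier, g2 x ∈ R.carrier := by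
    intro x hx
    have hxc : x ∈ (P).carrier := Rsub hd hv hx
    have h1 : g2 x ∈ (P).carrier := by
      exact_mod_cast hg2iso.1.1 (by exact_mod_cast hxc)
    have h2 : g2 x ∉ Q.carrier := by
      intro h2
      obtain ⟨x', hx', hgx'⟩ := hsurjQ (g2 x) h2
      have : x' = x := hinj x' (Qsub hd hv hx') x hxc hgx'
      exact Finset.disjoint_left.1 hd (this ▸ hx') hx
    rcases Finset.mem_union.1 (by rwa [← graft_carrier hd hv]) with h | h
    · exact absurd h h2
    · exact h
  have hbijR : Set.BijOn g2 ↑R.carrier ↑R.carrier := by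
    refine ⟨fun x hx => by exact_mod_cast hmapsR x (by exact_mod_cast hx),
      fun x hx y hy h => hinj x (Rsub hd hv (by exact_mod_cast hx))
        y (Rsub hd hv (by exact_mod_cast hy)) h, fun y hy => ?_⟩
    have hyc : y ∈ (P).carrier := Rsub hd hv (by exact_mod_cast hy)
    obtain ⟨x, hx, hgx⟩ := hg2iso.1.2.2 (by exact_mod_cast hyc : y ∈ (↑(P).carrier : Set α))
    have hxc : x ∈ (P).carrier := by exact_mod_cast hx
    have hxR : x ∈ R.carrier := by
      rcases Finset.mem_union.1 (by rwa [← graft_carrier hd hv]) with h | h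
      · exfalso
        have := hmapsQ x h
        rw [hgx] at this
        exact Finset.disjoint_left.1 hd this (by exact_mod_cast hy)
      · exact h
    exact ⟨x, by exact_mod_cast hxR, hgx⟩
  exact ⟨hg2iso, hg2v, hbijQ, hbijR⟩

end Main3

section Defs2
variable {α : Type*} [DecidableEq α] [Nonempty α]

noncomputable def g2F (Q R : FinPoset α) (v : α) (g : α → α) : α → α :=
  swepF Q R v (Q.carrier.image g) ∘ g

noncomputable def aF (Q R : FinPoset α) (v : α) (g : α → α) (x : α) : α :=
  if x ∈ Q.carrier then g2F Q R v g x else x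

noncomputable def hF (Q R : FinPoset α) (v : α) (g : α → α) (x : α) : α :=
  if x ∈ R.carrier then g2F Q R v g x else x

lemma g2F_def (Q R : FinPoset α) (v : α) (g : α → α) :
    g2F Q R v g = swepF Q R v (Q.carrier.image g) ∘ g := rfl

end Defs2

section Main4
variable {α : Type*} [DecidableEq α] [Nonempty α] {Q R : FinPoset α} {v : α}

local notation "P" => FinPoset.graft Q R v
local notation "SS" => FinPoset.SSet Q R v

variable (hQ : Q.Connected) (hR : R.Connected) (hd : Disjoint Q.carrier R.carrier)
  (hv : v ∈ R.minSet)

set_option linter.unusedVariables false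
set_option linter.unusedSectionVars false

include hQ hd hv

lemma aF_isos {g : α → α} (hg : g ∈ Isos P P) (hgv : g v = v) : aF Q R v g ∈ Isos Q Q := by
  obtain ⟨hg2iso, hg2v, hbijQ, hbijR⟩ := g2_spec hQ hd hv hg hgv
  rw [← g2F_def] at hg2iso hg2v hbijQ hbijR
  refine ⟨hbijQ.congr fun x hx => (if_pos (by exact_mod_cast hx)).symm, ?_,
    fun x hx => if_neg hx⟩
  intro x hx y hy
  have hgx : g2F Q R v g x ∈ Q.carrier := by exact_mod_cast hbijQ.1 (by exact_mod_cast hx)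
  rw [show aF Q R v g x = g2F Q R v g x from if_pos hx,
    show aF Q R v g y = g2F Q R v g y from if_pos hy,
    ← le_Q hd hv hgx, ← hg2iso.2.1 x (Qsub hd hv hx) y (Qsub hd hv hy), le_Q hd hv hx]

lemma hF_isos {g : α → α} (hg : g ∈ Isos P P) (hgv : g v = v) :
    hF Q R v g ∈ Isos R R ∧ hF Q R v g v = v := by
  obtain ⟨hg2iso, hg2v, hbijQ, hbijR⟩ := g2_spec hQ hd hv hg hgv
  rw [← g2F_def] at hg2iso hg2v hbijQ hbijR
  refine ⟨⟨hbijR.congr fun x hx => (if_pos (by exact_mod_cast hx)).symm, ?_,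
    fun x hx => if_neg hx⟩, ?_⟩
  · intro x hx y hy
    have hgy : g2F Q R v g y ∈ R.carrier := by exact_mod_cast hbijR.1 (by exact_mod_cast hy)
    rw [show hF Q R v g x = g2F Q R v g x from if_pos hx,
      show hF Q R v g y = g2F Q R v g y from if_pos hy,
      ← le_R hd hv hgy, ← hg2iso.2.1 x (Rsub hd hv hx) y (Rsub hd hv hy), le_R hd hv hy]
  · rw [show hF Q R v g v = g2F Q R v g v from if_pos (hvc hv)]
    exact hg2v

lemma key_equiv :
    Nonempty ((↥(FinPoset.Isos Q Q) × {h : α → α // h ∈ FinPoset.Isos R R ∧ h v = v} ×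
        {I // I ∈ SS}) ≃ {f : α → α // f ∈ FinPoset.Isos P P ∧ f v = v}) := by
  refine ⟨⟨fun x => ⟨swapF Q R v x.2.2.1 ∘ (x.1.1 ∘ x.2.1.1), ?_⟩,
    fun g => ⟨⟨aF Q R v g.1, aF_isos hQ hd hv g.2.1 g.2.2⟩,
      ⟨hF Q R v g.1, hF_isos hQ hd hv g.2.1 g.2.2⟩,
      ⟨Q.carrier.image g.1, image_mem_SS hQ hd hv g.2.1 g.2.2⟩⟩, ?_, ?_⟩⟩
  · obtain ⟨⟨a, ha⟩, ⟨h, hh, hhv⟩, ⟨I, hI⟩⟩ := x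
    obtain ⟨hglue, hgluev, hQx, hRx⟩ := glue_spec hd hv ha hh hhv
    refine ⟨aut_comp (swap_isos hQ hd hv hI) hglue, ?_⟩
    show swapF Q R v I ((a ∘ h) v) = v
    rw [hgluev]
    exact swap_v hd hv hI
  · rintro ⟨⟨a, ha⟩, ⟨h, hh, hhv⟩, ⟨I, hI⟩⟩
    obtain ⟨hglue, hgluev, hQx, hRx⟩ := glue_spec hd hv ha hh hhv
    set g : α → α := swapF Q R v I ∘ (a ∘ h) with hgdef
    have himg : Q.carrier.image g = I := by
      have h1 : Q.carrier.image g = (Q.carrier.image (a ∘ h)).image (swapF Q R v I) := by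
        rw [Finset.image_image]
      have h2 : Q.carrier.image (a ∘ h) = Q.carrier := by
        rw [Finset.image_congr (fun x hx => hQx x hx), aut_image ha]
      rw [h1, h2, swap_image hQ hd hv hI]
    refine Prod.ext (Subtype.ext ?_) (Prod.ext (Subtype.ext ?_) (Subtype.ext ?_))
    · funext x
      show aF Q R v g x = a x
      by_cases hx : x ∈ Q.carrier
      · rw [show aF Q R v g x = g2F Q R v g x from if_pos hx]
        show swepF Q R v (Q.carrier.image g) (g x) = a x
        rw [himg]
        show swepF Q R v I (swapF Q R v I ((a ∘ h) x)) = a x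
        rw [swep_swap hQ hd hv hI, hQx x hx]
      · rw [show aF Q R v g x = x from if_neg hx, ha.2.2 x hx]
    · funext x
      show hF Q R v g x = h x
      by_cases hx : x ∈ R.carrier
      · rw [show hF Q R v g x = g2F Q R v g x from if_pos hx]
        show swepF Q R v (Q.carrier.image g) (g x) = h x
        rw [himg]
        show swepF Q R v I (swapF Q R v I ((a ∘ h) x)) = h x
        rw [swep_swap hQ hd hv hI, hRx x hx]
      · rw [show hF Q R v g x = x from if_neg hx, hh.2.2 x hx]
    · exact himg
  · rintro ⟨g, hg, hgv⟩
    obtain ⟨hg2iso, hg2v, hbijQ, hbijR⟩ := g2_spec hQ hd hv hg hgv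
    rw [← g2F_def] at hg2iso hg2v hbijQ hbijR
    have hI : Q.carrier.image g ∈ SS := image_mem_SS hQ hd hv hg hgv
    refine Subtype.ext ?_
    show swapF Q R v (Q.carrier.image g) ∘ (aF Q R v g ∘ hF Q R v g) = g
    funext x
    have hA : aF Q R v g (hF Q R v g x) = g2F Q R v g x := by
      by_cases hxQ : x ∈ Q.carrier
      · rw [show hF Q R v g x = x from if_neg (Finset.disjoint_left.1 hd hxQ),
          show aF Q R v g x = g2F Q R v g x from if_pos hxQ]
      by_cases hxR : x ∈ R.carrier
      · rw [show hF Q R v g x = g2F Q R v g x from if_pos hxR]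
        have h2 : g2F Q R v g x ∈ R.carrier := by exact_mod_cast hbijR.1 (by exact_mod_cast hxR)
        rw [show aF Q R v g (g2F Q R v g x) = g2F Q R v g x from
          if_neg (Finset.disjoint_right.1 hd h2)]
      · rw [show hF Q R v g x = x from if_neg hxR,
          show aF Q R v g x = x from if_neg hxQ]
        have hxc : x ∉ (P).carrier := by
          rw [graft_carrier hd hv, Finset.mem_union]
          push_neg
          exact ⟨hxQ, hxR⟩
        symm
        show swepF Q R v (Q.carrier.image g) (g x) = x
        rw [hg.2.2 x hxc]
        refine swep_eq3 hxQ (fun h => ?_)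
        exact hxc ((SS_spec hd hv hI).1 h)
    show swapF Q R v (Q.carrier.image g) (aF Q R v g (hF Q R v g x)) = g x
    rw [hA]
    show swapF Q R v (Q.carrier.image g) (swepF Q R v (Q.carrier.image g) (g x)) = g x
    exact swap_swep hQ hd hv hI (g x)

end Main4

end FinPoset

/-- For finite connected posets `Q`, `R` on disjoint sets and
`v ∈ min(R)`, with `N_v(Q,R)` the number of `I ◎ (Q ↘_v R)` with `I_- = {v}` and
`I ≅ Q`, one has `|Aut_v(Q ↘_v R)| = |Aut(Q)| ⬝ |Aut_v(R)| ⬝ N_v(Q,R)`, where `Aut_v`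
denotes the automorphisms fixing `v`. -/
theorem stabilizer_card_graft {α : Type*} [DecidableEq α] (Q R : FinPoset α)
    (hQ : Q.Connected) (hR : R.Connected) (hd : Disjoint Q.carrier R.carrier)
    (v : α) (hv : v ∈ R.minSet) :
    Nat.card {f : α → α //
        f ∈ FinPoset.Isos (FinPoset.graft Q R v) (FinPoset.graft Q R v) ∧ f v = v}
      = FinPoset.pairing Q Q
        * Nat.card {h : α → α // h ∈ FinPoset.Isos R R ∧ h v = v}
        * ((FinPoset.graft Q R v).circSet.filter (fun I =>
            (FinPoset.graft Q R v).below I = {v} ∧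
              (FinPoset.Isos ((FinPoset.graft Q R v).restrict I) Q).Nonempty)).card := by
  obtain ⟨q0, hq0⟩ := hQ.1
  haveI : Nonempty α := ⟨q0⟩
  obtain ⟨e⟩ := FinPoset.key_equiv hQ hd hv
  have h1 : Nat.card {f : α → α //
      f ∈ FinPoset.Isos (FinPoset.graft Q R v) (FinPoset.graft Q R v) ∧ f v = v}
      = Nat.card (↥(FinPoset.Isos Q Q) × {h : α → α // h ∈ FinPoset.Isos R R ∧ h v = v} ×
        {I // I ∈ FinPoset.SSet Q R v}) := (Nat.card_congr e).symm
  rw [h1, Nat.card_prod, Nat.card_prod, ← mul_assoc]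
  have h2 : Nat.card {I // I ∈ FinPoset.SSet Q R v} = (FinPoset.SSet Q R v).card :=
    Nat.card_eq_finsetCard _
  rw [h2]
  rfl
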